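/- Let φ_i, φ be proper lower semi-continuous convex functions on ℝⁿ with φ_i* ↓ φ* pointwise. Then the recession functions satisfy φ̄_i ↑ φ̄ pointwise on the unit sphere, where φ̄(θ) = lim_{λ→∞} φ(p+λθ)/λ for any p with φ(p) < ∞. -/

import Mathlib

open Filter Topology

/-- `φ : ℝⁿ → (-∞,∞]` is a proper lower semi-continuous convex function. -/
def IsLscConvexFn {n : ℕ} (φ : EuclideanSpace ℝ (Fin n) → EReal) : Prop :=
  LowerSemicontinuous φ ∧ (∀ x, φ x ≠ ⊥) ∧ (∃ x, φ x ≠ ⊤) ∧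
    ∀ x y : EuclideanSpace ℝ (Fin n), ∀ a b : ℝ, 0 < a → 0 < b → a + b = 1 →
      φ (a • x + b • y) ≤ (a : EReal) * φ x + (b : EReal) * φ y

/-- The Legendre transform. -/
noncomputable def legendre {n : ℕ} (φ : EuclideanSpace ℝ (Fin n) → EReal)
    (y : EuclideanSpace ℝ (Fin n)) : EReal :=
  ⨆ x : EuclideanSpace ℝ (Fin n), ((inner ℝ x y : ℝ) : EReal) - φ x

/-- The recession function `φ̄(θ) = sup_{λ>0} (φ(p+λθ) - φ(p))/λ` computed with
base point `p ∈ dom φ`. -/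
noncomputable def recessionFn {n : ℕ} (φ : EuclideanSpace ℝ (Fin n) → EReal)
    (p θ : EuclideanSpace ℝ (Fin n)) : EReal :=
  ⨆ lam : {l : ℝ // 0 < l}, ((lam.1⁻¹ : ℝ) : EReal) * (φ (p + lam.1 • θ) - φ p)

namespace FMAux

lemma coe_sub_le_of_le {r b : ℝ} {z : EReal} (h : (↑(r - b) : EReal) ≤ z) :
    (r : EReal) - z ≤ (b : EReal) := by
  apply EReal.sub_le_of_le_add
  calc (r : EReal) = (b : EReal) + ↑(r - b) := by norm_cast; ring
  _ ≤ (b : EReal) + z := by exact add_le_add le_rfl h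

lemma ne_bot_sub_coe {x : EReal} (hx : x ≠ ⊥) (c : ℝ) : x - (c : EReal) ≠ ⊥ := by
  induction x using EReal.rec with
  | bot => exact absurd rfl hx
  | coe r => norm_cast; exact EReal.coe_ne_bot _
  | top => simp [EReal.top_sub_coe]

/-- adding a real constant, as an order isomorphism of `EReal`. -/
noncomputable def addCoeIso (c : ℝ) : EReal ≃o EReal where
  toFun x := x + (c : EReal)
  invFun x := x - (c : EReal)
  left_inv x := EReal.add_sub_cancel_right
  right_inv x := EReal.sub_add_cancel
  map_rel_iff' := by
    intro a b
    exact (EReal.addLECancellable_coe c).add_le_add_iff_right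

lemma iSup_add_coe {ι : Sort*} (f : ι → EReal) (c : ℝ) :
    (⨆ i, f i) + (c : EReal) = ⨆ i, (f i + (c : EReal)) :=
  _root_.map_iSup (addCoeIso c) f

lemma iSup_sub_coe {ι : Sort*} (f : ι → EReal) (c : ℝ) :
    (⨆ i, f i) - (c : EReal) = ⨆ i, (f i - (c : EReal)) := by
  have := iSup_add_coe f (-c)
  simpa [EReal.coe_neg, ← sub_eq_add_neg] using this

lemma coe_sub_iInf {ι : Sort*} (f : ι → EReal) (c : ℝ) :
    (c : EReal) - (⨅ i, f i) = ⨆ i, ((c : EReal) - f i) := by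
  have hneg : -(⨅ i, f i) = ⨆ i, -(f i) := by
    apply le_antisymm
    · rw [EReal.neg_le]
      exact le_iInf fun i => by rw [← EReal.neg_le_neg_iff, neg_neg]; exact le_iSup (fun i => -f i) i
    · exact iSup_le fun i => EReal.neg_le_neg_iff.2 (iInf_le f i)
  rw [sub_eq_add_neg, hneg, add_comm, iSup_add_coe]
  simp [sub_eq_add_neg, add_comm]

/-- multiplication by a positive real constant, as an order isomorphism of `EReal`. -/
noncomputable def mulCoeIso {k : ℝ} (hk : 0 < k) : EReal ≃o EReal where
  toFun x := (k : EReal) * x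
  invFun x := (k⁻¹ : ℝ) * x
  left_inv x := by
    show ((k⁻¹:ℝ) : EReal) * ((k : EReal) * x) = x
    rw [← mul_assoc, ← EReal.coe_mul, inv_mul_cancel₀ hk.ne', EReal.coe_one, one_mul]
  right_inv x := by
    show ((k:ℝ) : EReal) * (((k⁻¹:ℝ) : EReal) * x) = x
    rw [← mul_assoc, ← EReal.coe_mul, mul_inv_cancel₀ hk.ne', EReal.coe_one, one_mul]
  map_rel_iff' := by
    intro a b
    constructor
    · intro h
      have := mul_le_mul_of_nonneg_left h (EReal.coe_nonneg.2 (inv_nonneg.2 hk.le))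
      simp only [Equiv.coe_fn_mk, ← mul_assoc, ← EReal.coe_mul, inv_mul_cancel₀ hk.ne',
        EReal.coe_one, one_mul] at this
      exact this
    · intro h
      exact mul_le_mul_of_nonneg_left h (EReal.coe_nonneg.2 hk.le)

lemma coe_mul_iSup {ι : Sort*} (f : ι → EReal) {k : ℝ} (hk : 0 < k) :
    (k : EReal) * (⨆ i, f i) = ⨆ i, (k : EReal) * f i :=
  _root_.map_iSup (mulCoeIso hk) f


variable {n : ℕ} {φ : EuclideanSpace ℝ (Fin n) → EReal}

def Epi (φ : EuclideanSpace ℝ (Fin n) → EReal) : Set (EuclideanSpace ℝ (Fin n) × ℝ) :=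
  {q | φ q.1 ≤ (q.2 : EReal)}

lemma epi_closed (hl : LowerSemicontinuous φ) : IsClosed (Epi φ) := by
  rw [← isOpen_compl_iff]
  have : (Epi φ)ᶜ = ⋃ c : ℝ, (φ ⁻¹' Set.Ioi (c : EReal)) ×ˢ Set.Iio c := by
    ext q
    simp only [Epi, Set.mem_compl_iff, Set.mem_setOf_eq, not_le, Set.mem_iUnion, Set.mem_prod,
      Set.mem_Iio, Set.mem_preimage, Set.mem_Ioi]
    constructor
    · intro h
      obtain ⟨c, hc1, hc2⟩ := EReal.exists_between_coe_real h
      exact ⟨c, hc2, by exact_mod_cast hc1⟩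
    · rintro ⟨c, h1, h2⟩
      exact lt_trans (by exact_mod_cast h2) h1
  rw [this]
  exact isOpen_iUnion fun c => (hl.isOpen_preimage _).prod isOpen_Iio

lemma epi_convex (hφ : IsLscConvexFn φ) : Convex ℝ (Epi φ) := by
  rintro ⟨x, t1⟩ h1 ⟨y, t2⟩ h2 a b ha hb hab
  simp only [Epi, Set.mem_setOf_eq] at h1 h2 ⊢
  rcases ha.eq_or_lt with rfl | ha'
  · simp only [zero_add] at hab; subst hab; simpa using h2
  rcases hb.eq_or_lt with rfl | hb'
  · simp only [add_zero] at hab; subst hab; simpa using h1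
  calc φ (a • x + b • y) ≤ (a : EReal) * φ x + (b : EReal) * φ y :=
        hφ.2.2.2 x y a b ha' hb' hab
  _ ≤ (a : EReal) * (t1 : EReal) + (b : EReal) * (t2 : EReal) :=
        add_le_add (mul_le_mul_of_nonneg_left h1 (EReal.coe_nonneg.2 ha))
          (mul_le_mul_of_nonneg_left h2 (EReal.coe_nonneg.2 hb))
  _ = ((a * t1 + b * t2 : ℝ) : EReal) := by norm_cast

/-- Separation of a point under the graph from the epigraph. -/
lemma sep (hφ : IsLscConvexFn φ) {x₀ : EuclideanSpace ℝ (Fin n)} {r : ℝ}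
    (h : ¬ φ x₀ ≤ (r : EReal)) :
    ∃ (y : EuclideanSpace ℝ (Fin n)) (s u : ℝ),
      (∀ x : EuclideanSpace ℝ (Fin n), ∀ t : ℝ, φ x ≤ (t : EReal) →
        (inner ℝ x y : ℝ) + t * s < u) ∧
      u < (inner ℝ x₀ y : ℝ) + r * s ∧ s ≤ 0 := by
  have hx₀ : (x₀, r) ∉ Epi φ := h
  obtain ⟨f, u, hfu, hux⟩ :=
    geometric_hahn_banach_closed_point (epi_convex hφ) (epi_closed hφ.1) hx₀
  set g : EuclideanSpace ℝ (Fin n) →L[ℝ] ℝ :=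
    f.comp (ContinuousLinearMap.inl ℝ (EuclideanSpace ℝ (Fin n)) ℝ) with hg
  set s : ℝ := f (0, 1) with hs
  have hdec : ∀ x : EuclideanSpace ℝ (Fin n), ∀ t : ℝ, f (x, t) = g x + t * s := by
    intro x t
    have : (x, t) = (x, (0:ℝ)) + t • ((0 : EuclideanSpace ℝ (Fin n)), (1:ℝ)) := by
      simp [Prod.ext_iff]
    rw [this, map_add, map_smul]
    simp [hg, hs, smul_eq_mul, mul_comm]
  set y : EuclideanSpace ℝ (Fin n) :=
    (InnerProductSpace.toDual ℝ (EuclideanSpace ℝ (Fin n))).symm g with hy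
  have hgy : ∀ x, g x = (inner ℝ x y : ℝ) := by
    intro x
    rw [hy, real_inner_comm]
    exact (InnerProductSpace.toDual_symm_apply).symm
  -- the separation inequalities
  have H1 : ∀ x : EuclideanSpace ℝ (Fin n), ∀ t : ℝ, φ x ≤ (t : EReal) →
      (inner ℝ x y : ℝ) + t * s < u := by
    intro x t hxt
    have := hfu (x, t) hxt
    rwa [hdec, hgy] at this
  have H2 : u < (inner ℝ x₀ y : ℝ) + r * s := by
    have := hux
    rwa [hdec, hgy] at this
  refine ⟨y, s, u, H1, H2, ?_⟩
  -- properness gives a point in the epigraph; pushing `t → ∞` forces `s ≤ 0`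
  obtain ⟨x₁, hx₁⟩ := hφ.2.2.1
  have hbot := hφ.2.1 x₁
  lift φ x₁ to ℝ using ⟨hx₁, hbot⟩ with c₁ hc₁
  by_contra hs'
  push_neg at hs'
  set m : ℝ := max 0 ((u - (inner ℝ x₁ y : ℝ) - c₁ * s) / s) + 1 with hm
  have hmpos : 0 < m := by positivity
  have : (inner ℝ x₁ y : ℝ) + (c₁ + m) * s < u :=
    H1 x₁ (c₁ + m) (by rw [← hc₁]; exact_mod_cast le_add_of_nonneg_right hmpos.le)
  have h1 : m * s ≤ u - (inner ℝ x₁ y : ℝ) - c₁ * s := by nlinarith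
  have h2 : (u - (inner ℝ x₁ y : ℝ) - c₁ * s) / s < m := by
    calc (u - (inner ℝ x₁ y : ℝ) - c₁ * s) / s ≤ max 0 ((u - (inner ℝ x₁ y : ℝ) - c₁ * s) / s) :=
          le_max_right _ _
    _ < m := by rw [hm]; linarith
  have := (div_lt_iff₀ hs').1 h2
  linarith


variable {n : ℕ} {φ : EuclideanSpace ℝ (Fin n) → EReal}

lemma minorant_conj {a : EuclideanSpace ℝ (Fin n)} {b : ℝ}
    (hmin : ∀ x, (↑((inner ℝ x a : ℝ) - b) : EReal) ≤ φ x) : legendre φ a ≤ (b : EReal) :=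
  iSup_le fun x => coe_sub_le_of_le (hmin x)

lemma minorant_of_sep_neg {y : EuclideanSpace ℝ (Fin n)} {s u : ℝ} (hs : s < 0)
    (H1 : ∀ x : EuclideanSpace ℝ (Fin n), ∀ t : ℝ, φ x ≤ (t : EReal) →
      (inner ℝ x y : ℝ) + t * s < u)
    (hbot : ∀ x, φ x ≠ ⊥) :
    ∀ x, (↑((inner ℝ x ((-s)⁻¹ • y) : ℝ) - u / (-s)) : EReal) ≤ φ x := by
  intro x
  by_cases htop : φ x = ⊤
  · rw [htop]; exact le_top
  lift φ x to ℝ using ⟨htop, hbot x⟩ with c hc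
  have h1 : (inner ℝ x y : ℝ) + c * s < u := H1 x c (le_of_eq hc.symm)
  have hσ : 0 < -s := neg_pos.2 hs
  rw [EReal.coe_le_coe_iff, real_inner_smul_right, inv_mul_eq_div, div_sub_div_same,
    div_le_iff₀ hσ]
  nlinarith

lemma exists_affine_minorant (hφ : IsLscConvexFn φ) :
    ∃ (a : EuclideanSpace ℝ (Fin n)) (b : ℝ),
      ∀ x, (↑((inner ℝ x a : ℝ) - b) : EReal) ≤ φ x := by
  obtain ⟨x₁, hx₁⟩ := hφ.2.2.1
  have hbot := hφ.2.1 x₁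
  lift φ x₁ to ℝ using ⟨hx₁, hbot⟩ with c₁ hc₁
  have h : ¬ φ x₁ ≤ ((c₁ - 1 : ℝ) : EReal) := by
    rw [← hc₁]; exact not_le.2 (by exact_mod_cast sub_one_lt c₁)
  obtain ⟨y, s, u, H1, H2, hs0⟩ := sep hφ h
  have hcs : (inner ℝ x₁ y : ℝ) + c₁ * s < u := H1 x₁ c₁ (le_of_eq hc₁.symm)
  have hs : s < 0 := by nlinarith
  exact ⟨(-s)⁻¹ • y, u / (-s), minorant_of_sep_neg hs H1 hφ.2.1⟩

lemma biconj_eq (hφ : IsLscConvexFn φ) (x₀ : EuclideanSpace ℝ (Fin n)) :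
    legendre (legendre φ) x₀ = φ x₀ := by
  apply le_antisymm
  · refine iSup_le fun y => ?_
    by_cases htop : φ x₀ = ⊤
    · rw [htop]; exact le_top
    lift φ x₀ to ℝ using ⟨htop, hφ.2.1 x₀⟩ with c hc
    have hy : (↑((inner ℝ x₀ y : ℝ) - c) : EReal) ≤ legendre φ y := by
      have h1 : (↑(inner ℝ x₀ y : ℝ) : EReal) - φ x₀ ≤ legendre φ y :=
        le_iSup (fun x => (↑(inner ℝ x y : ℝ) : EReal) - φ x) x₀
      rw [← hc] at h1
      calc (↑((inner ℝ x₀ y : ℝ) - c) : EReal) = ↑(inner ℝ x₀ y : ℝ) - (c : EReal) := by norm_cast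
      _ ≤ _ := h1
    have h2 := coe_sub_le_of_le hy
    rwa [real_inner_comm] at h2
  · by_contra hlt
    push_neg at hlt
    obtain ⟨r, hr1, hr2⟩ := EReal.exists_between_coe_real hlt
    have key : (r : EReal) ≤ legendre (legendre φ) x₀ := by
      have h : ¬ φ x₀ ≤ (r : EReal) := not_le.2 hr2
      obtain ⟨y, s, u, H1, H2, hs0⟩ := sep hφ h
      have step : ∀ (a : EuclideanSpace ℝ (Fin n)) (b : ℝ),
          (∀ x, (↑((inner ℝ x a : ℝ) - b) : EReal) ≤ φ x) → r < (inner ℝ x₀ a : ℝ) - b →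
          (r : EReal) ≤ legendre (legendre φ) x₀ := by
        intro a b hmin hrb
        calc (r : EReal) ≤ ↑((inner ℝ x₀ a : ℝ) - b) := by exact_mod_cast hrb.le
        _ = ↑(inner ℝ a x₀ : ℝ) - ↑b := by rw [real_inner_comm]; norm_cast
        _ ≤ ↑(inner ℝ a x₀ : ℝ) - legendre φ a := EReal.sub_le_sub le_rfl (minorant_conj hmin)
        _ ≤ _ := le_iSup (fun y => (↑(inner ℝ y x₀ : ℝ) : EReal) - legendre φ y) a
      rcases hs0.lt_or_eq with hs | hs
      · refine step _ _ (minorant_of_sep_neg hs H1 hφ.2.1) ?_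
        have hσ : 0 < -s := neg_pos.2 hs
        rw [real_inner_smul_right, inv_mul_eq_div, div_sub_div_same, lt_div_iff₀ hσ]
        nlinarith
      · -- s = 0
        subst hs
        simp only [mul_zero, add_zero] at H1 H2
        obtain ⟨a₀, b₀, hmin₀⟩ := exists_affine_minorant hφ
        set d : ℝ := (inner ℝ x₀ y : ℝ) - u with hd
        have hdpos : 0 < d := by rw [hd]; linarith
        set m₀ : ℝ := (inner ℝ x₀ a₀ : ℝ) - b₀ with hm₀
        rcases le_or_gt (r + 1 - m₀) 0 with hτ | hτ
        · exact step a₀ b₀ hmin₀ (by rw [← hm₀]; linarith)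
        · set τ : ℝ := (r + 1 - m₀) / d with hτd
          have hτpos : 0 < τ := div_pos hτ hdpos
          refine step (a₀ + τ • y) (b₀ + τ * u) ?_ ?_
          · intro x
            by_cases htop : φ x = ⊤
            · rw [htop]; exact le_top
            lift φ x to ℝ using ⟨htop, hφ.2.1 x⟩ with c hc
            have h1 : (inner ℝ x y : ℝ) < u := H1 x c (le_of_eq hc.symm)
            have h2 : (inner ℝ x a₀ : ℝ) - b₀ ≤ c := by
              have := hmin₀ x; rw [← hc] at this; exact_mod_cast this
            rw [EReal.coe_le_coe_iff, inner_add_right, real_inner_smul_right]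
            nlinarith
          · rw [inner_add_right, real_inner_smul_right]
            have : τ * d = r + 1 - m₀ := div_mul_cancel₀ _ hdpos.ne'
            rw [hd] at this
            rw [hm₀] at *
            nlinarith
    exact absurd (lt_of_le_of_lt key hr1) (lt_irrefl _)


variable {n : ℕ} {φ : EuclideanSpace ℝ (Fin n) → EReal}

lemma le_coe_of_forall_add_eps {x : EReal} {ρ : ℝ}
    (h : ∀ ε : ℝ, 0 < ε → x ≤ ((ρ + ε : ℝ) : EReal)) : x ≤ (ρ : EReal) := by
  induction x using EReal.rec with
  | bot => exact bot_le
  | coe r =>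
    rw [EReal.coe_le_coe_iff]
    refine le_of_forall_pos_le_add fun ε hε => ?_
    have := h ε hε
    rw [EReal.coe_le_coe_iff] at this
    linarith
  | top => exact absurd (top_le_iff.1 (h 1 one_pos)) (EReal.coe_ne_top _)

lemma slope_mono (hφ : IsLscConvexFn φ) {p θ : EuclideanSpace ℝ (Fin n)} {c : ℝ}
    (hp : ((c : ℝ) : EReal) = φ p) {l m : ℝ} (hl : 0 < l) (hlm : l ≤ m) :
    ((l⁻¹ : ℝ) : EReal) * (φ (p + l • θ) - (c : EReal)) ≤
      ((m⁻¹ : ℝ) : EReal) * (φ (p + m • θ) - (c : EReal)) := by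
  rcases hlm.eq_or_lt with rfl | hlt
  · exact le_refl _
  have hm : 0 < m := hl.trans hlt
  set t : ℝ := l / m with htdef
  have ht : 0 < t := div_pos hl hm
  have ht1 : t < 1 := (div_lt_one hm).2 hlt
  have hconv := hφ.2.2.2 (p + m • θ) p t (1 - t) ht (by linarith) (by ring)
  have hpt : t • (p + m • θ) + (1 - t) • p = p + l • θ := by
    have h1 : t * m = l := div_mul_cancel₀ _ hm.ne'
    rw [smul_add, smul_smul, h1, sub_smul, one_smul]; abel
  rw [hpt, ← hp] at hconv
  by_cases hA : φ (p + m • θ) = ⊤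
  · rw [hA, EReal.top_sub_coe, EReal.coe_mul_top_of_pos (inv_pos.2 hm)]
    exact le_top
  obtain ⟨a, ha⟩ : ∃ a : ℝ, φ (p + m • θ) = (a : EReal) :=
    ⟨(φ (p + m • θ)).toReal, ((EReal.coe_toReal hA (hφ.2.1 _)).symm)⟩
  rw [ha] at hconv ⊢
  have hconv' : φ (p + l • θ) ≤ ((t * a + (1 - t) * c : ℝ) : EReal) := by
    calc φ (p + l • θ) ≤ (t : EReal) * (a : EReal) + ((1 - t : ℝ) : EReal) * (c : EReal) := hconv
    _ = _ := by norm_cast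
  calc ((l⁻¹ : ℝ) : EReal) * (φ (p + l • θ) - (c : EReal))
      ≤ ((l⁻¹ : ℝ) : EReal) * (((t * a + (1 - t) * c : ℝ) : EReal) - (c : EReal)) :=
        mul_le_mul_of_nonneg_left (EReal.sub_le_sub hconv' le_rfl)
          (EReal.coe_nonneg.2 (inv_nonneg.2 hl.le))
  _ = ((l⁻¹ * (t * a + (1 - t) * c - c) : ℝ) : EReal) := by norm_cast
  _ = ((m⁻¹ * (a - c) : ℝ) : EReal) := by
        congr 1
        rw [htdef]
        field_simp
        ring
  _ = ((m⁻¹ : ℝ) : EReal) * ((a : EReal) - (c : EReal)) := by norm_cast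

lemma recessionFn_le {ψ χ : EuclideanSpace ℝ (Fin n) → EReal}
    (hψ : IsLscConvexFn ψ) (hχ : IsLscConvexFn χ) (hle : ∀ x, ψ x ≤ χ x)
    {p θ : EuclideanSpace ℝ (Fin n)} (hp : χ p ≠ ⊤) :
    recessionFn ψ p θ ≤ recessionFn χ p θ := by
  have hψtop : ψ p ≠ ⊤ := fun h => hp (top_le_iff.1 (h ▸ hle p))
  obtain ⟨c₁, hc₁⟩ : ∃ c : ℝ, ψ p = (c : EReal) :=
    ⟨(ψ p).toReal, (EReal.coe_toReal hψtop (hψ.2.1 p)).symm⟩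
  obtain ⟨c₂, hc₂⟩ : ∃ c : ℝ, χ p = (c : EReal) :=
    ⟨(χ p).toReal, (EReal.coe_toReal hp (hχ.2.1 p)).symm⟩
  have hcc : c₁ ≤ c₂ := by
    have := hle p; rw [hc₁, hc₂] at this; exact_mod_cast this
  by_cases hR : recessionFn χ p θ = ⊤
  · rw [hR]; exact le_top
  have hRbot : recessionFn χ p θ ≠ ⊥ := by
    intro hbot
    have h1 : ((1 : ℝ)⁻¹ : ℝ) • θ = θ := by norm_num
    have hterm := le_iSup (fun lam : {l : ℝ // 0 < l} =>
      ((lam.1⁻¹ : ℝ) : EReal) * (χ (p + lam.1 • θ) - χ p)) ⟨1, one_pos⟩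
    rw [recessionFn] at hbot
    rw [hbot, le_bot_iff] at hterm
    simp only [inv_one, one_smul, EReal.coe_one, one_mul] at hterm
    rw [hc₂] at hterm
    exact ne_bot_sub_coe (hχ.2.1 _) c₂ hterm
  obtain ⟨ρ, hρ⟩ : ∃ ρ : ℝ, recessionFn χ p θ = (ρ : EReal) :=
    ⟨(recessionFn χ p θ).toReal, (EReal.coe_toReal hR hRbot).symm⟩
  rw [hρ]
  refine iSup_le ?_
  rintro ⟨l, hl⟩
  refine le_coe_of_forall_add_eps fun ε hε => ?_
  set d : ℝ := c₂ - c₁ with hd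
  have hdnn : 0 ≤ d := by linarith
  set L : ℝ := max l (max 1 (d / ε)) with hL
  have hlL : l ≤ L := le_max_left _ _
  have hLpos : 0 < L := lt_of_lt_of_le hl hlL
  have hLd : d / ε ≤ L := le_trans (le_max_right _ _) (le_max_right _ _)
  have step1 : ((l⁻¹ : ℝ) : EReal) * (ψ (p + l • θ) - ψ p) ≤
      ((L⁻¹ : ℝ) : EReal) * (ψ (p + L • θ) - (c₁ : EReal)) := by
    rw [hc₁]
    exact slope_mono hψ hc₁.symm hl hlL
  have step2 : ((L⁻¹ : ℝ) : EReal) * (ψ (p + L • θ) - (c₁ : EReal)) ≤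
      ((L⁻¹ : ℝ) : EReal) * (χ (p + L • θ) - (c₁ : EReal)) :=
    mul_le_mul_of_nonneg_left (EReal.sub_le_sub (hle _) le_rfl)
      (EReal.coe_nonneg.2 (inv_nonneg.2 hLpos.le))
  by_cases hT : χ (p + L • θ) = ⊤
  · exfalso
    apply hR
    have hterm : ((L⁻¹ : ℝ) : EReal) * (χ (p + L • θ) - χ p) ≤ recessionFn χ p θ :=
      le_iSup (fun lam : {l : ℝ // 0 < l} =>
        ((lam.1⁻¹ : ℝ) : EReal) * (χ (p + lam.1 • θ) - χ p)) ⟨L, hLpos⟩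
    rw [hT, hc₂, EReal.top_sub_coe, EReal.coe_mul_top_of_pos (inv_pos.2 hLpos)] at hterm
    exact top_le_iff.1 hterm
  obtain ⟨a, ha⟩ : ∃ a : ℝ, χ (p + L • θ) = (a : EReal) :=
    ⟨(χ (p + L • θ)).toReal, (EReal.coe_toReal hT (hχ.2.1 _)).symm⟩
  have hterm : ((L⁻¹ * (a - c₂) : ℝ) : EReal) ≤ (ρ : EReal) := by
    have h : ((L⁻¹ : ℝ) : EReal) * (χ (p + L • θ) - χ p) ≤ recessionFn χ p θ :=
      le_iSup (fun lam : {l : ℝ // 0 < l} =>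
        ((lam.1⁻¹ : ℝ) : EReal) * (χ (p + lam.1 • θ) - χ p)) ⟨L, hLpos⟩
    rw [ha, hc₂, hρ] at h
    calc ((L⁻¹ * (a - c₂) : ℝ) : EReal) = ((L⁻¹ : ℝ) : EReal) * ((a : EReal) - (c₂ : EReal)) := by
          norm_cast
    _ ≤ _ := h
  have hterm' : L⁻¹ * (a - c₂) ≤ ρ := by exact_mod_cast hterm
  have hdL : L⁻¹ * d ≤ ε := by
    rw [div_le_iff₀ hε] at hLd
    rw [inv_mul_le_iff₀ hLpos]
    linarith [mul_comm ε L]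
  calc ((l⁻¹ : ℝ) : EReal) * (ψ (p + l • θ) - ψ p)
      ≤ ((L⁻¹ : ℝ) : EReal) * (χ (p + L • θ) - (c₁ : EReal)) := le_trans step1 step2
  _ = ((L⁻¹ * (a - c₁) : ℝ) : EReal) := by rw [ha]; norm_cast
  _ ≤ ((ρ + ε : ℝ) : EReal) := by
        rw [EReal.coe_le_coe_iff]
        have : L⁻¹ * (a - c₁) = L⁻¹ * (a - c₂) + L⁻¹ * d := by rw [hd]; ring
        rw [this]
        linarith

end FMAux

/-- If `φ_i* ↓ φ*` pointwise then the recession functions satisfy `φ̄_i ↑ φ̄`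
pointwise on the unit sphere. -/
theorem recession_mono_conv_of_conjugate_mono_conv {n : ℕ}
    (φs : ℕ → EuclideanSpace ℝ (Fin n) → EReal)
    (φ : EuclideanSpace ℝ (Fin n) → EReal)
    (hφs : ∀ i, IsLscConvexFn (φs i)) (hφ : IsLscConvexFn φ)
    (hanti : ∀ y, Antitone fun i => legendre (φs i) y)
    (hconv : ∀ y, Tendsto (fun i => legendre (φs i) y) atTop (nhds (legendre φ y))) :
    ∀ p : EuclideanSpace ℝ (Fin n), φ p ≠ ⊤ →
      ∀ θ : EuclideanSpace ℝ (Fin n), ‖θ‖ = 1 →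
        (Monotone fun i => recessionFn (φs i) p θ) ∧
          Tendsto (fun i => recessionFn (φs i) p θ) atTop
            (nhds (recessionFn φ p θ)) := by
  intro p hptop θ _
  obtain ⟨c, hc⟩ : ∃ c : ℝ, φ p = (c : EReal) :=
    ⟨(φ p).toReal, (EReal.coe_toReal hptop (hφ.2.1 p)).symm⟩
  have hinf : ∀ y, legendre φ y = ⨅ i, legendre (φs i) y := fun y =>
    tendsto_nhds_unique (hconv y) (tendsto_atTop_iInf (hanti y))
  have hrepr : ∀ i x, φs i x = ⨆ y, ((inner ℝ y x : ℝ) : EReal) - legendre (φs i) y := fun i x =>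
    (FMAux.biconj_eq (hφs i) x).symm
  have hreprφ : ∀ x, φ x = ⨆ y, ((inner ℝ y x : ℝ) : EReal) - legendre φ y := fun x =>
    (FMAux.biconj_eq hφ x).symm
  have hle_pt : ∀ i x, φs i x ≤ φ x := by
    intro i x
    rw [hrepr i x, hreprφ x]
    refine iSup_mono fun y => EReal.sub_le_sub le_rfl ?_
    rw [hinf y]; exact iInf_le _ i
  have hmono_pt : ∀ x, Monotone fun i => φs i x := by
    intro x i j hij
    simp only
    rw [hrepr i x, hrepr j x]
    exact iSup_mono fun y => EReal.sub_le_sub le_rfl (hanti y hij)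
  have hsup_pt : ∀ x, φ x = ⨆ i, φs i x := by
    intro x
    rw [hreprφ x]
    have hpt : ∀ y : EuclideanSpace ℝ (Fin n), ((inner ℝ y x : ℝ) : EReal) - legendre φ y
        = ⨆ i, (((inner ℝ y x : ℝ) : EReal) - legendre (φs i) y) := by
      intro y
      rw [hinf y, FMAux.coe_sub_iInf]
    calc (⨆ y, ((inner ℝ y x : ℝ) : EReal) - legendre φ y)
        = ⨆ y, ⨆ i, (((inner ℝ y x : ℝ) : EReal) - legendre (φs i) y) := iSup_congr hpt
    _ = ⨆ i, ⨆ y, (((inner ℝ y x : ℝ) : EReal) - legendre (φs i) y) := iSup_comm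
    _ = ⨆ i, φs i x := iSup_congr fun i => (hrepr i x).symm
  have hφsp_top : ∀ i, φs i p ≠ ⊤ := fun i h => hptop (top_le_iff.1 (h ▸ hle_pt i p))
  have hMono : Monotone fun i => recessionFn (φs i) p θ := fun i j hij =>
    FMAux.recessionFn_le (hφs i) (hφs j) (fun x => hmono_pt x hij) (hφsp_top j)
  refine ⟨hMono, ?_⟩
  have hsup : recessionFn φ p θ = ⨆ i, recessionFn (φs i) p θ := by
    apply le_antisymm
    · refine iSup_le ?_
      rintro ⟨l, hl⟩
      show ((l⁻¹ : ℝ) : EReal) * (φ (p + l • θ) - φ p) ≤ _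
      rw [hc, hsup_pt (p + l • θ), FMAux.iSup_sub_coe, FMAux.coe_mul_iSup _ (inv_pos.2 hl)]
      refine iSup_le fun i => ?_
      have h1 : ((l⁻¹ : ℝ) : EReal) * (φs i (p + l • θ) - (c : EReal)) ≤
          ((l⁻¹ : ℝ) : EReal) * (φs i (p + l • θ) - φs i p) := by
        refine mul_le_mul_of_nonneg_left (EReal.sub_le_sub le_rfl ?_)
          (EReal.coe_nonneg.2 (inv_nonneg.2 hl.le))
        rw [← hc]; exact hle_pt i p
      refine le_trans h1 (le_trans ?_ (le_iSup (fun i => recessionFn (φs i) p θ) i))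
      exact le_iSup (fun lam : {l : ℝ // 0 < l} =>
        ((lam.1⁻¹ : ℝ) : EReal) * (φs i (p + lam.1 • θ) - φs i p)) ⟨l, hl⟩
    · exact iSup_le fun i => FMAux.recessionFn_le (hφs i) hφ (hle_pt i) hptop
  rw [hsup]
  exact tendsto_atTop_iSup hMono
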